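/- Let Σ be a closed oriented surface with a separating simple closed geodesic γ_* decomposing Σ = Σ₁ ∪_{γ_*} Σ₂, with π₁(Σ_j) ⊂ π₁(Σ) free subgroups and w_{*,j} ∈ π₁(Σ_j) representing γ_*. For w_j, w'_j ∈ π₁(Σ_j) (j = 1,2) such that the geodesic in the class [w₂w₁] intersects γ_* exactly twice, the conjugacy classes [w₂w₁] = [w'₂w'₁] in π₁(Σ) if and only if there exist p, q ∈ ℤ with w₂ = w_{*,2}^p w'₂ w_{*,2}^q and w₁ = w_{*,1}^{−q} w'₁ w_{*,1}^{−p}. -/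

import Mathlib

/-!
STATEMENT 13: Let `Σ` be a closed oriented surface with a separating simple closed
geodesic `γ_*` decomposing `Σ = Σ₁ ∪_{γ_*} Σ₂`, with `π₁(Σ_j) ⊂ π₁(Σ)` free subgroups
and `w_{*,j} ∈ π₁(Σ_j)` representing `γ_*`.  For `w_j, w'_j ∈ π₁(Σ_j)` (`j = 1,2`) such
that the geodesic in the class `[w₂w₁]` intersects `γ_*` exactly twice, the conjugacy
classes `[w₂w₁] = [w'₂w'₁]` in `π₁(Σ)` if and only if there exist `p, q ∈ ℤ` with
`w₂ = w_{*,2}^p w'₂ w_{*,2}^q` and `w₁ = w_{*,1}^{−q} w'₁ w_{*,1}^{−p}`.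

We model `π₁(Σ)` as the presented group on generators `a_i = of (i, true)`,
`b_i = of (i, false)` (`i : Fin g`, `g = g₁ + g₂`) with the single surface relation;
`π₁(Σ₁)` is the subgroup generated by the first `2g₁` generators and `π₁(Σ₂)` by the
remaining ones; `w_{*,1} = [a_1,b_1]⋯[a_{g₁},b_{g₁}]` and
`w_{*,2} = [a_g,b_g]⁻¹⋯[a_{g₁+1},b_{g₁+1}]⁻¹ = ([a_{g₁+1},b_{g₁+1}]⋯[a_g,b_g])⁻¹`.
By Lemma 4.4 of the paper, the geodesic in the class `[w₂w₁]` intersects `γ_*` exactly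
twice precisely when neither `w₁` nor `w₂` is a power of `w_{*,1}` resp. `w_{*,2}`; we
take this as the formal expression of that geometric hypothesis.
-/

open scoped commutatorElement

/-- The surface relator `[a_1,b_1]⋯[a_g,b_g]` in the free group. -/
def surfaceRel (g : ℕ) : FreeGroup (Fin g × Bool) :=
  (List.ofFn fun i : Fin g =>
    ⁅FreeGroup.of (i, true), FreeGroup.of (i, false)⁆).prod

/-- The fundamental group of the closed oriented surface of genus `g`. -/
abbrev SurfaceGroup (g : ℕ) :=
  PresentedGroup ({surfaceRel g} : Set (FreeGroup (Fin g × Bool)))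

/-- The generator `a i`. -/
def sa {g : ℕ} (i : Fin g) : SurfaceGroup g := PresentedGroup.of (i, true)

/-- The generator `b i`. -/
def sb {g : ℕ} (i : Fin g) : SurfaceGroup g := PresentedGroup.of (i, false)

/-- The commutator `[a i, b i]`. -/
def scom {g : ℕ} (i : Fin g) : SurfaceGroup g := ⁅sa i, sb i⁆



open Monoid Function List Monoid.PushoutI

namespace Stmt13Aux

section PushoutTheory

variable {ι : Type*} {G : ι → Type*} {H : Type*} [Group H] [∀ i, Group (G i)]

/-- product of a list of letters in the pushout -/
def xp (φ : ∀ i, H →* G i) (L : List (Σ i, G i)) : PushoutI φ :=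
  (L.map fun e => PushoutI.of e.1 e.2).prod

/-- a "reduced word" as a raw list -/
def Ok (φ : ∀ i, H →* G i) (L : List (Σ i, G i)) : Prop :=
  (∀ e ∈ L, e.2 ∉ (φ e.1).range) ∧ (L.map Sigma.fst).IsChain (· ≠ ·)

variable {φ : ∀ i, H →* G i}

theorem xp_nil : xp φ [] = 1 := rfl

theorem xp_append (L L' : List (Σ i, G i)) : xp φ (L ++ L') = xp φ L * xp φ L' := by
  simp [xp]

theorem xp_cons (e : Σ i, G i) (L : List (Σ i, G i)) :
    xp φ (e :: L) = PushoutI.of e.1 e.2 * xp φ L := by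
  simp [xp]

theorem xp_singleton (e : Σ i, G i) : xp φ [e] = PushoutI.of e.1 e.2 := by
  simp [xp]

theorem xp_pair (e f : Σ i, G i) :
    xp φ [e, f] = PushoutI.of e.1 e.2 * PushoutI.of f.1 f.2 := by
  simp [xp, mul_assoc]

/-- the inverted reversed list -/
def invRev (L : List (Σ i, G i)) : List (Σ i, G i) :=
  (L.map fun e => ⟨e.1, e.2⁻¹⟩).reverse

theorem invRev_map_fst (L : List (Σ i, G i)) :
    (invRev L).map Sigma.fst = (L.map Sigma.fst).reverse := by
  simp [invRev, List.map_reverse, List.map_map]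

theorem xp_invRev (L : List (Σ i, G i)) : xp φ (invRev L) = (xp φ L)⁻¹ := by
  rw [xp, invRev, List.map_reverse, List.map_map, xp, List.prod_inv_reverse, List.map_map]
  congr 2

theorem ok_invRev {L : List (Σ i, G i)} (h : Ok φ L) : Ok φ (invRev L) := by
  constructor
  · intro e he
    simp only [invRev, List.mem_reverse, List.mem_map] at he
    obtain ⟨a, ha, rfl⟩ := he
    rintro ⟨x, hx⟩
    exact h.1 a ha ⟨x⁻¹, by rw [map_inv, hx]; simp⟩
  · rw [invRev_map_fst, List.isChain_reverse]
    exact h.2.imp fun _ _ hab => Ne.symm hab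

/-- turn an `Ok` list into a `CoprodI.Word` -/
def toWord (L : List (Σ i, G i)) (h : Ok φ L) : CoprodI.Word G where
  toList := L
  ne_one := fun l hl hl1 => (h.1 l hl) (hl1 ▸ one_mem _)
  chain_ne := (List.isChain_map Sigma.fst).1 h.2

theorem ofCoprodI_word_prod (W : CoprodI.Word G) :
    PushoutI.ofCoprodI (W.prod) = xp φ W.toList := by
  rw [CoprodI.Word.prod, map_list_prod, List.map_map]
  rfl

theorem toWord_reduced (L : List (Σ i, G i)) (h : Ok φ L) :
    PushoutI.Reduced φ (toWord L h) := fun gg hg => h.1 gg hg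

theorem ofCoprodI_toWord_prod (L : List (Σ i, G i)) (h : Ok φ L) :
    PushoutI.ofCoprodI ((toWord L h).prod) = xp φ L := by
  rw [CoprodI.Word.prod, map_list_prod, List.map_map, xp]
  show (L.map (⇑PushoutI.ofCoprodI ∘ fun l => CoprodI.of l.snd)).prod = _
  congr 1


theorem nr_mul_left {i : ι} {a : G i} (ha : a ∉ (φ i).range) (u : H) :
    φ i u * a ∉ (φ i).range := by
  rintro ⟨x, hx⟩
  exact ha ⟨u⁻¹ * x, by rw [map_mul, hx, map_inv]; group⟩

theorem nr_mul_right {i : ι} {a : G i} (ha : a ∉ (φ i).range) (u : H) :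
    a * φ i u ∉ (φ i).range := by
  rintro ⟨x, hx⟩
  exact ha ⟨x * u⁻¹, by rw [map_mul, map_inv, hx]; group⟩

theorem nr_inv {i : ι} {a : G i} (ha : a ∉ (φ i).range) : a⁻¹ ∉ (φ i).range := by
  rintro ⟨x, hx⟩
  exact ha ⟨x⁻¹, by rw [map_inv, hx, inv_inv]⟩

theorem base_conj {i j : ι} (h : H) (A : G j) (B : G i) :
    PushoutI.base φ h * (PushoutI.of j A * PushoutI.of i B) * (PushoutI.base φ h)⁻¹
      = PushoutI.of (φ := φ) j (φ j h * A) * PushoutI.of i (B * φ i h⁻¹) := by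
  have e1 : PushoutI.base φ h = PushoutI.of j (φ j h) := (PushoutI.of_apply_eq_base φ j h).symm
  have e2 : (PushoutI.base φ h)⁻¹ = PushoutI.of i (φ i h⁻¹) := by
    rw [← map_inv, ← PushoutI.of_apply_eq_base φ i]
  rw [e2, e1, map_mul, map_mul]
  group

theorem mid_collapse {i j : ι} (u : H) (A : G i) (B : G j) :
    PushoutI.of (φ := φ) i (A * φ i u) * PushoutI.of j (φ j u⁻¹ * B)
      = PushoutI.of (φ := φ) i A * PushoutI.of j B := by
  rw [map_mul, map_mul, PushoutI.of_apply_eq_base, PushoutI.of_apply_eq_base]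
  have : PushoutI.base φ u * PushoutI.base φ u⁻¹ = 1 := by rw [← map_mul]; simp
  calc PushoutI.of (φ := φ) i A * PushoutI.base φ u * (PushoutI.base φ u⁻¹ * PushoutI.of j B)
      = PushoutI.of (φ := φ) i A * (PushoutI.base φ u * PushoutI.base φ u⁻¹) *
          PushoutI.of j B := by group
    _ = _ := by rw [this]; group


variable (hφ : ∀ i, Injective (φ i))
include hφ


include hφ

/-- Uniqueness of index sequences of reduced words. -/
theorem idx_eq {L L' : List (Σ i, G i)} (hL : Ok φ L) (hL' : Ok φ L')
    (h : xp φ L = xp φ L') : L.map Sigma.fst = L'.map Sigma.fst := by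
  classical
  obtain ⟨d⟩ := PushoutI.NormalWord.transversal_nonempty φ hφ
  obtain ⟨w1, hw1p, hw1m⟩ := (toWord_reduced L hL).exists_normalWord_prod_eq d
  obtain ⟨w2, hw2p, hw2m⟩ := (toWord_reduced L' hL').exists_normalWord_prod_eq d
  rw [ofCoprodI_toWord_prod] at hw1p hw2p
  rw [h, ← hw2p] at hw1p
  have hww : w1 = w2 := PushoutI.NormalWord.prod_injective hw1p
  calc L.map Sigma.fst = w1.toList.map Sigma.fst := hw1m.symm
    _ = w2.toList.map Sigma.fst := by rw [hww]
    _ = L'.map Sigma.fst := hw2m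

/-- a reduced 2-letter word is never in the base -/
theorem two_ne_base {i j : ι} (hij : j ≠ i) {g₂ : G j} {g₁ : G i}
    (hg₂ : g₂ ∉ (φ j).range) (hg₁ : g₁ ∉ (φ i).range) (h : H) :
    PushoutI.of j g₂ * PushoutI.of i g₁ ≠ PushoutI.base φ h := by
  intro heq
  have hOk : Ok φ [⟨j, g₂⟩, ⟨i, g₁⟩] := by
    refine ⟨?_, ?_⟩
    · rintro e he
      rcases List.mem_pair.1 he with rfl | rfl <;> assumption
    · simp [hij]
  have hred := toWord_reduced _ hOk
  have := hred.eq_empty_of_mem_range hφ (by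
    rw [ofCoprodI_toWord_prod, xp_pair]
    exact ⟨h, heq.symm⟩)
  have : (toWord [⟨j, g₂⟩, ⟨i, g₁⟩] hOk).toList = [] := by rw [this]; rfl
  simp [toWord] at this

/-- index list of a word equal to a reduced 2-letter word -/
theorem eq_two_word {L : List (Σ i, G i)} (hL : Ok φ L) {i j : ι} (hij : j ≠ i)
    {g₂ : G j} {g₁ : G i} (hg₂ : g₂ ∉ (φ j).range) (hg₁ : g₁ ∉ (φ i).range)
    (h : xp φ L = PushoutI.of j g₂ * PushoutI.of i g₁) :
    L.map Sigma.fst = [j, i] := by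
  have hOk : Ok φ [⟨j, g₂⟩, ⟨i, g₁⟩] := by
    refine ⟨?_, ?_⟩
    · rintro e he
      rcases List.mem_pair.1 he with rfl | rfl <;> assumption
    · simp [hij]
  have := idx_eq hφ hL hOk (by rw [h, xp_pair])
  simpa using this

/-- unique decomposition into a product of two letters, up to shifting by the base -/
theorem unique_decomp {i j : ι} (hij : j ≠ i) (A C : G j) (B D : G i)
    (h : PushoutI.of j A * PushoutI.of i B = PushoutI.of (φ := φ) j C * PushoutI.of i D) :
    ∃ k : H, C = A * φ j k ∧ D = φ i k⁻¹ * B := by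
  have key : PushoutI.of (φ := φ) j (C⁻¹ * A) = PushoutI.of i (D * B⁻¹) := by
    have := congrArg (fun z => PushoutI.of (φ := φ) j C⁻¹ * z * PushoutI.of (φ := φ) i B⁻¹) h
    simp only [map_mul, map_inv] at this ⊢
    calc (PushoutI.of (φ := φ) j C)⁻¹ * PushoutI.of j A
        = (PushoutI.of (φ := φ) j C)⁻¹ * (PushoutI.of j A * PushoutI.of i B) *
            (PushoutI.of i B)⁻¹ := by group
      _ = (PushoutI.of (φ := φ) j C)⁻¹ * (PushoutI.of j C * PushoutI.of i D) *
            (PushoutI.of i B)⁻¹ := by rw [h]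
      _ = PushoutI.of i D * (PushoutI.of (φ := φ) i B)⁻¹ := by group
  have hmem : PushoutI.of (φ := φ) j (C⁻¹ * A) ∈ (PushoutI.base φ).range := by
    rw [← PushoutI.inf_of_range_eq_base_range hφ hij]
    exact ⟨⟨C⁻¹ * A, rfl⟩, ⟨D * B⁻¹, key.symm⟩⟩
  obtain ⟨k', hk'⟩ := hmem
  have h1 : C⁻¹ * A = φ j k' := by
    apply PushoutI.of_injective hφ j
    rw [hk'.symm, PushoutI.of_apply_eq_base]
  have h2 : D * B⁻¹ = φ i k' := by
    apply PushoutI.of_injective hφ i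
    rw [← key, hk'.symm, PushoutI.of_apply_eq_base]
  refine ⟨k'⁻¹, ?_, ?_⟩
  · rw [map_inv, ← h1]; group
  · rw [inv_inv, ← h2]; group


theorem pair_cases {c b J I : ι} (hcb : c ≠ b) (hJI : J ≠ I) {x : G c} {y : G b}
    {A : G J} {B : G I} (hx : x ∉ (φ c).range) (hy : y ∉ (φ b).range)
    (hA : A ∉ (φ J).range) (hB : B ∉ (φ I).range)
    (h : PushoutI.of (φ := φ) c x * PushoutI.of b y = PushoutI.of (φ := φ) J A * PushoutI.of I B) :
    c = J ∧ b = I := by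
  have hOk : Ok φ [⟨c, x⟩, ⟨b, y⟩] := by
    refine ⟨?_, ?_⟩
    · rintro e he
      rcases List.mem_pair.1 he with rfl | rfl <;> assumption
    · simp [hcb]
  have := eq_two_word hφ hOk hJI hA hB (by rw [xp_pair]; exact h)
  simpa using this

theorem ok_concat {L : List (Σ i, G i)} {m : ι} {l : G m}
    (h : Ok φ (L ++ [⟨m, l⟩])) :
    Ok φ L ∧ l ∉ (φ m).range ∧ ∀ x ∈ (L.map Sigma.fst).getLast?, x ≠ m := by
  obtain ⟨h1, h2⟩ := h
  rw [List.map_append, List.isChain_append] at h2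
  refine ⟨⟨fun e he => h1 e (List.mem_append_left _ he), h2.1⟩,
    h1 ⟨m, l⟩ (List.mem_append_right _ (List.mem_singleton_self _)), ?_⟩
  intro x hx
  exact h2.2.2 x hx m (by simp)

theorem ok_sandwich {L : List (Σ i, G i)} {m : ι} {l : G m}
    (h : Ok φ (L ++ [⟨m, l⟩])) {M : List (Σ i, G i)}
    (hM1 : ∀ e ∈ M, e.2 ∉ (φ e.1).range)
    (hM2 : (M.map Sigma.fst).IsChain (· ≠ ·))
    (hMne : M ≠ [])
    (hhead : (M.map Sigma.fst).head? = some m)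
    (hlast : (M.map Sigma.fst).getLast? = some m) :
    Ok φ (L ++ M ++ invRev L) := by
  obtain ⟨hOkL, hl, hjunc⟩ := ok_concat hφ h
  have hinv := ok_invRev hOkL
  refine ⟨?_, ?_⟩
  · intro e he
    rcases List.mem_append.1 he with he' | he'
    · rcases List.mem_append.1 he' with h'' | h''
      · exact hOkL.1 e h''
      · exact hM1 e h''
    · exact hinv.1 e he'
  · rw [List.map_append, List.map_append, List.isChain_append, List.isChain_append]
    have hMfne : M.map Sigma.fst ≠ [] := by simpa using hMne
    refine ⟨⟨hOkL.2, hM2, ?_⟩, hinv.2, ?_⟩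
    · intro x hx y hy
      rw [hhead] at hy
      simp only [Option.mem_some_iff] at hy
      subst hy
      exact hjunc x hx
    · intro x hx y hy
      rw [List.getLast?_append_of_ne_nil _ hMfne, hlast] at hx
      simp only [Option.mem_some_iff] at hx
      subst hx
      rw [invRev_map_fst, List.head?_reverse] at hy
      exact (hjunc y hy).symm

theorem no_conj {i j : ι} (hij : j ≠ i) {g₂ : G j} {g₁ : G i}
    (hg₂ : g₂ ∉ (φ j).range) (hg₁ : g₁ ∉ (φ i).range)
    {L M : List (Σ i, G i)} (hOk : Ok φ (L ++ M ++ invRev L)) (hM : 3 ≤ M.length) :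
    xp φ L * xp φ M * (xp φ L)⁻¹ ≠ PushoutI.of j g₂ * PushoutI.of i g₁ := by
  intro heq
  have h2 := eq_two_word hφ hOk hij hg₂ hg₁
    (by rw [xp_append, xp_append, xp_invRev]; exact heq)
  have := congrArg List.length h2
  simp only [List.length_map, List.length_append, invRev, List.length_reverse,
    List.length_cons, List.length_nil] at this
  omega


theorem main0 {i j : ι} (hij : j ≠ i) :
    ∀ (L : List (Σ i, G i)), Ok φ L →
      ∀ (m : ι) (v : G m) {g₂ : G j} {g₁ : G i},
        g₂ ∉ (φ j).range → g₁ ∉ (φ i).range →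
        xp φ L * PushoutI.of m v * (xp φ L)⁻¹ ≠ PushoutI.of j g₂ * PushoutI.of i g₁ := by
  intro L
  induction L using List.reverseRecOn with
  | nil =>
    intro _ m v g₂ g₁ hg₂ hg₁ heq
    rw [xp_nil, one_mul, inv_one, mul_one] at heq
    by_cases hv : v ∈ (φ m).range
    · obtain ⟨h₀, rfl⟩ := hv
      rw [PushoutI.of_apply_eq_base] at heq
      exact two_ne_base hφ hij hg₂ hg₁ h₀ heq.symm
    · have hOk1 : Ok φ [⟨m, v⟩] := by
        refine ⟨?_, by simp⟩
        rintro e he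
        rcases List.mem_singleton.1 he with rfl
        exact hv
      have := eq_two_word hφ hOk1 hij hg₂ hg₁ (by simpa [xp_singleton] using heq)
      simp at this
  | append_singleton L e ih =>
    intro hOk m v g₂ g₁ hg₂ hg₁ heq
    obtain ⟨m', l⟩ := e
    obtain ⟨hOkL, hl, hjunc⟩ := ok_concat hφ hOk
    rw [xp_append, xp_singleton, mul_inv_rev] at heq
    have heq' : xp φ L * (PushoutI.of m' l * PushoutI.of m v * (PushoutI.of m' l)⁻¹) *
        (xp φ L)⁻¹ = PushoutI.of j g₂ * PushoutI.of i g₁ := by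
      rw [← heq]; group
    by_cases hmm : m' = m
    · subst hmm
      have hrw : PushoutI.of m' l * PushoutI.of m' v * (PushoutI.of m' l)⁻¹
          = PushoutI.of (φ := φ) m' (l * v * l⁻¹) := by
        simp [map_mul, map_inv]
      rw [hrw] at heq'
      exact ih hOkL m' (l * v * l⁻¹) hg₂ hg₁ heq'
    · by_cases hv : v ∈ (φ m).range
      · obtain ⟨h₀, rfl⟩ := hv
        have hrw : PushoutI.of m' l * PushoutI.of m (φ m h₀) * (PushoutI.of m' l)⁻¹
            = PushoutI.of (φ := φ) m' (l * φ m' h₀ * l⁻¹) := by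
          rw [PushoutI.of_apply_eq_base, ← PushoutI.of_apply_eq_base φ m' h₀]
          simp [map_mul, map_inv]
        rw [hrw] at heq'
        exact ih hOkL m' (l * φ m' h₀ * l⁻¹) hg₂ hg₁ heq'
      · have hxpM : xp φ [⟨m', l⟩, ⟨m, v⟩, ⟨m', l⁻¹⟩]
            = PushoutI.of m' l * PushoutI.of m v * (PushoutI.of m' l)⁻¹ := by
          simp [xp, mul_assoc, map_inv]
        have hOkS : Ok φ (L ++ [⟨m', l⟩, ⟨m, v⟩, ⟨m', l⁻¹⟩] ++ invRev L) := by
          apply ok_sandwich hφ hOk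
          · rintro e he
            simp only [List.mem_cons, List.not_mem_nil, or_false] at he
            rcases he with rfl | rfl | rfl
            · exact hl
            · exact hv
            · exact nr_inv hl
          · simp [hmm, Ne.symm hmm]
          · simp
          · simp
          · simp
        exact no_conj hφ hij hg₂ hg₁ hOkS (by simp) (by rw [hxpM]; exact heq')

theorem main {i j : ι} (hij : j ≠ i) {g₂ : G j} {g₁ : G i}
    (hg₂ : g₂ ∉ (φ j).range) (hg₁ : g₁ ∉ (φ i).range) :
    ∀ (L : List (Σ i, G i)), Ok φ L →
      ∀ (b c : ι), b ≠ c → ∀ (a₂ : G b) (a₁ : G c),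
        a₂ ∉ (φ b).range → a₁ ∉ (φ c).range →
        xp φ L * (PushoutI.of b a₂ * PushoutI.of c a₁) * (xp φ L)⁻¹
          = PushoutI.of j g₂ * PushoutI.of i g₁ →
        ∃ h : H,
          PushoutI.of (φ := φ) b a₂ * PushoutI.of c a₁
              = PushoutI.base φ h * (PushoutI.of j g₂ * PushoutI.of i g₁) *
                (PushoutI.base φ h)⁻¹ ∨
          PushoutI.of (φ := φ) b a₂ * PushoutI.of c a₁
              = PushoutI.base φ h * (PushoutI.of i g₁ * PushoutI.of j g₂) *
                (PushoutI.base φ h)⁻¹ := by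
  intro L
  induction L using List.reverseRecOn with
  | nil =>
    intro _ b c hbc a₂ a₁ ha₂ ha₁ heq
    rw [xp_nil, one_mul, inv_one, mul_one] at heq
    exact ⟨1, Or.inl (by rw [heq]; simp)⟩
  | append_singleton L e ih =>
    intro hOk b c hbc a₂ a₁ ha₂ ha₁ heq
    obtain ⟨m, l⟩ := e
    obtain ⟨hOkL, hl, hjunc⟩ := ok_concat hφ hOk
    rw [xp_append, xp_singleton, mul_inv_rev] at heq
    have heq' : xp φ L * (PushoutI.of m l * (PushoutI.of b a₂ * PushoutI.of c a₁) *
        (PushoutI.of m l)⁻¹) * (xp φ L)⁻¹ = PushoutI.of j g₂ * PushoutI.of i g₁ := by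
      rw [← heq]; group
    by_cases hmb : m = b
    · subst hmb
      -- junction on the left letter
      by_cases hr : l * a₂ ∈ (φ m).range
      · obtain ⟨k₀, hk₀⟩ := hr
        have h1 : PushoutI.of (φ := φ) c (φ c k₀ * a₁)
            = PushoutI.of m (l * a₂) * PushoutI.of c a₁ := by
          rw [map_mul, PushoutI.of_apply_eq_base, ← hk₀, PushoutI.of_apply_eq_base]
        have hM : PushoutI.of m l * (PushoutI.of m a₂ * PushoutI.of c a₁) *
            (PushoutI.of m l)⁻¹
            = PushoutI.of (φ := φ) c (φ c k₀ * a₁) * PushoutI.of m l⁻¹ := by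
          rw [h1, map_mul, map_inv]; group
        rw [hM] at heq'
        obtain ⟨h, hcase | hcase⟩ := ih hOkL c m (Ne.symm hbc) (φ c k₀ * a₁) l⁻¹
          (nr_mul_left ha₁ k₀) (nr_inv hl) heq'
        · rw [base_conj] at hcase
          obtain ⟨hcj, hbi⟩ := pair_cases hφ (Ne.symm hbc) hij (nr_mul_left ha₁ k₀)
            (nr_inv hl) (nr_mul_left hg₂ h) (nr_mul_right hg₁ h⁻¹) hcase
          have hc' := hcj.symm; have hb' := hbi.symm
          subst hc'; subst hb'
          obtain ⟨k, hC, hD⟩ := unique_decomp hφ hij _ _ _ _ hcase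
          refine ⟨k, Or.inr ?_⟩
          have e2 : l⁻¹ = φ i k * (g₁ * φ i h⁻¹) := by
            rw [hD]; simp only [map_inv]; group
          have e3 : a₂ = (φ i k * g₁) * φ i (h⁻¹ * k₀) := by
            have e1 : a₂ = l⁻¹ * φ i k₀ := by rw [hk₀]; group
            rw [e1, e2]; simp only [map_mul, map_inv]; group
          have e4 : a₁ = φ j (h⁻¹ * k₀)⁻¹ * (g₂ * φ j k⁻¹) := by
            have h5 : a₁ = (φ j k₀)⁻¹ * (φ j h * g₂) * (φ j k)⁻¹ := by
              rw [hC]; group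
            rw [h5]; simp only [map_mul, map_inv, mul_inv_rev, inv_inv]; group
          rw [base_conj, e3, e4, mid_collapse]
        · rw [base_conj] at hcase
          obtain ⟨hci, hbj⟩ := pair_cases hφ (Ne.symm hbc) (Ne.symm hij)
            (nr_mul_left ha₁ k₀) (nr_inv hl) (nr_mul_left hg₁ h) (nr_mul_right hg₂ h⁻¹) hcase
          have hc' := hci.symm; have hb' := hbj.symm
          subst hc'; subst hb'
          obtain ⟨k, hC, hD⟩ := unique_decomp hφ (Ne.symm hij) _ _ _ _ hcase
          refine ⟨k, Or.inl ?_⟩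
          have e2 : l⁻¹ = φ j k * (g₂ * φ j h⁻¹) := by
            rw [hD]; simp only [map_inv]; group
          have e3 : a₂ = (φ j k * g₂) * φ j (h⁻¹ * k₀) := by
            have e1 : a₂ = l⁻¹ * φ j k₀ := by rw [hk₀]; group
            rw [e1, e2]; simp only [map_mul, map_inv]; group
          have e4 : a₁ = φ i (h⁻¹ * k₀)⁻¹ * (g₁ * φ i k⁻¹) := by
            have h5 : a₁ = (φ i k₀)⁻¹ * (φ i h * g₁) * (φ i k)⁻¹ := by
              rw [hC]; group
            rw [h5]; simp only [map_mul, map_inv, mul_inv_rev, inv_inv]; group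
          rw [base_conj, e3, e4, mid_collapse]
      · -- non-merge contradiction, pattern (m, c, m)
        have hxpM : xp φ [⟨m, l * a₂⟩, ⟨c, a₁⟩, ⟨m, l⁻¹⟩]
            = PushoutI.of m l * (PushoutI.of m a₂ * PushoutI.of c a₁) *
              (PushoutI.of m l)⁻¹ := by
          simp [xp, mul_assoc, map_mul, map_inv]
        have hOkS : Ok φ (L ++ [⟨m, l * a₂⟩, ⟨c, a₁⟩, ⟨m, l⁻¹⟩] ++ invRev L) := by
          apply ok_sandwich hφ hOk
          · rintro e he
            simp only [List.mem_cons, List.not_mem_nil, or_false] at he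
            rcases he with rfl | rfl | rfl
            · exact hr
            · exact ha₁
            · exact nr_inv hl
          · simp [hbc, Ne.symm hbc]
          · simp
          · simp
          · simp
        exact absurd (by rw [hxpM]; exact heq') (no_conj hφ hij hg₂ hg₁ hOkS (by simp))
    · by_cases hmc : m = c
      · subst hmc
        by_cases hr : a₁ * l⁻¹ ∈ (φ m).range
        · obtain ⟨k₀, hk₀⟩ := hr
          have h1 : PushoutI.of (φ := φ) b (a₂ * φ b k₀)
              = PushoutI.of b a₂ * PushoutI.of m (a₁ * l⁻¹) := by
            rw [map_mul, PushoutI.of_apply_eq_base, ← hk₀, PushoutI.of_apply_eq_base]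
          have hM : PushoutI.of m l * (PushoutI.of b a₂ * PushoutI.of m a₁) *
              (PushoutI.of m l)⁻¹
              = PushoutI.of (φ := φ) m l * PushoutI.of b (a₂ * φ b k₀) := by
            rw [h1, map_mul, map_inv]; group
          rw [hM] at heq'
          obtain ⟨h, hcase | hcase⟩ := ih hOkL m b hmb l (a₂ * φ b k₀) hl
            (nr_mul_right ha₂ k₀) heq'
          · rw [base_conj] at hcase
            obtain ⟨hcj, hbi⟩ := pair_cases hφ hmb hij hl (nr_mul_right ha₂ k₀)
              (nr_mul_left hg₂ h) (nr_mul_right hg₁ h⁻¹) hcase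
            have hc' := hcj.symm; have hb' := hbi.symm
            subst hc'; subst hb'
            obtain ⟨k, hC, hD⟩ := unique_decomp hφ hij _ _ _ _ hcase
            refine ⟨k, Or.inr ?_⟩
            have e3 : a₂ = (φ i k * g₁) * φ i (h⁻¹ * k₀⁻¹) := by
              have h5 : a₂ = (φ i k) * (g₁ * φ i h⁻¹) * (φ i k₀)⁻¹ := by
                rw [hD]; simp only [map_inv]; group
              rw [h5]; simp only [map_mul, map_inv, mul_inv_rev, inv_inv]; group
            have e4 : a₁ = φ j (h⁻¹ * k₀⁻¹)⁻¹ * (g₂ * φ j k⁻¹) := by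
              have e1 : a₁ = φ j k₀ * l := by rw [hk₀]; group
              have e2 : l = (φ j h * g₂) * (φ j k)⁻¹ := by rw [hC]; group
              rw [e1, e2]; simp only [map_mul, map_inv, mul_inv_rev, inv_inv]; group
            rw [base_conj, e3, e4, mid_collapse]
          · rw [base_conj] at hcase
            obtain ⟨hci, hbj⟩ := pair_cases hφ hmb (Ne.symm hij) hl (nr_mul_right ha₂ k₀)
              (nr_mul_left hg₁ h) (nr_mul_right hg₂ h⁻¹) hcase
            have hc' := hci.symm; have hb' := hbj.symm
            subst hc'; subst hb'
            obtain ⟨k, hC, hD⟩ := unique_decomp hφ (Ne.symm hij) _ _ _ _ hcase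
            refine ⟨k, Or.inl ?_⟩
            have e3 : a₂ = (φ j k * g₂) * φ j (h⁻¹ * k₀⁻¹) := by
              have h5 : a₂ = (φ j k) * (g₂ * φ j h⁻¹) * (φ j k₀)⁻¹ := by
                rw [hD]; simp only [map_inv]; group
              rw [h5]; simp only [map_mul, map_inv, mul_inv_rev, inv_inv]; group
            have e4 : a₁ = φ i (h⁻¹ * k₀⁻¹)⁻¹ * (g₁ * φ i k⁻¹) := by
              have e1 : a₁ = φ i k₀ * l := by rw [hk₀]; group
              have e2 : l = (φ i h * g₁) * (φ i k)⁻¹ := by rw [hC]; group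
              rw [e1, e2]; simp only [map_mul, map_inv, mul_inv_rev, inv_inv]; group
            rw [base_conj, e3, e4, mid_collapse]
        · have hxpM : xp φ [⟨m, l⟩, ⟨b, a₂⟩, ⟨m, a₁ * l⁻¹⟩]
              = PushoutI.of m l * (PushoutI.of b a₂ * PushoutI.of m a₁) *
                (PushoutI.of m l)⁻¹ := by
            simp [xp, mul_assoc, map_mul, map_inv]
          have hOkS : Ok φ (L ++ [⟨m, l⟩, ⟨b, a₂⟩, ⟨m, a₁ * l⁻¹⟩] ++ invRev L) := by
            apply ok_sandwich hφ hOk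
            · rintro e he
              simp only [List.mem_cons, List.not_mem_nil, or_false] at he
              rcases he with rfl | rfl | rfl
              · exact hl
              · exact ha₂
              · exact hr
            · simp [hmb, Ne.symm hmb]
            · simp
            · simp
            · simp
          exact absurd (by rw [hxpM]; exact heq') (no_conj hφ hij hg₂ hg₁ hOkS (by simp))
      · -- m distinct from both b and c : 4-letter contradiction
        have hxpM : xp φ [⟨m, l⟩, ⟨b, a₂⟩, ⟨c, a₁⟩, ⟨m, l⁻¹⟩]
            = PushoutI.of m l * (PushoutI.of b a₂ * PushoutI.of c a₁) *
              (PushoutI.of m l)⁻¹ := by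
          simp [xp, mul_assoc, map_mul, map_inv]
        have hOkS : Ok φ (L ++ [⟨m, l⟩, ⟨b, a₂⟩, ⟨c, a₁⟩, ⟨m, l⁻¹⟩] ++ invRev L) := by
          apply ok_sandwich hφ hOk
          · rintro e he
            simp only [List.mem_cons, List.not_mem_nil, or_false] at he
            rcases he with rfl | rfl | rfl | rfl
            · exact hl
            · exact ha₂
            · exact ha₁
            · exact nr_inv hl
          · simp [hmb, hbc, Ne.symm hmc]
          · simp
          · simp
          · simp
        exact absurd (by rw [hxpM]; exact heq') (no_conj hφ hij hg₂ hg₁ hOkS (by simp))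

theorem set_nonrange (d : PushoutI.NormalWord.Transversal φ) {i : ι} {g' : G i}
    (hs : g' ∈ d.set i) (h1 : g' ≠ 1) : g' ∉ (φ i).range := by
  rintro ⟨h', rfl⟩
  apply h1
  obtain ⟨p, _, hup⟩ := (d.compl i).existsUnique (φ i h')
  have e1 := hup ⟨⟨φ i h', ⟨h', rfl⟩⟩, ⟨1, d.one_mem i⟩⟩ (mul_one _)
  have e2 := hup ⟨⟨1, Subgroup.one_mem _⟩, ⟨φ i h', hs⟩⟩ (one_mul _)
  have h3 := e1.trans e2.symm
  have := congrArg (fun q : ((φ i).range : Set (G i)) × (d.set i) => (q.2 : G i)) h3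
  simpa using this.symm

theorem exists_decomp (x : PushoutI φ) :
    ∃ (h : H) (L : List (Σ i, G i)), Ok φ L ∧ x = PushoutI.base φ h * xp φ L := by
  classical
  obtain ⟨d⟩ := PushoutI.NormalWord.transversal_nonempty φ hφ
  set w := PushoutI.NormalWord.equiv (d := d) x with hw
  have hx : x = w.prod := (PushoutI.NormalWord.equiv.symm_apply_apply x).symm
  have hOk : Ok φ w.toList := by
    refine ⟨?_, (List.isChain_map Sigma.fst).2 w.toWord.chain_ne⟩
    intro e he
    exact set_nonrange hφ d (w.normalized e.1 e.2 he) (w.toWord.ne_one e he)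
  refine ⟨w.head, w.toList, hOk, ?_⟩
  rw [hx]
  show PushoutI.NormalWord.prod w = _
  rw [PushoutI.NormalWord.prod]
  congr 1
  exact ofCoprodI_word_prod w.toWord

theorem conj_two_pushout {i j : ι} (hij : j ≠ i) {g₂ a₂ : G j} {g₁ a₁ : G i}
    (hg₂ : g₂ ∉ (φ j).range) (hg₁ : g₁ ∉ (φ i).range)
    (ha₂ : a₂ ∉ (φ j).range) (ha₁ : a₁ ∉ (φ i).range) (x : PushoutI φ)
    (heq : x * (PushoutI.of j a₂ * PushoutI.of i a₁) * x⁻¹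
      = PushoutI.of j g₂ * PushoutI.of i g₁) :
    ∃ h k : H, g₂ = φ j h * a₂ * φ j k ∧ g₁ = φ i k⁻¹ * a₁ * φ i h⁻¹ := by
  obtain ⟨h₀, L, hOkL, rfl⟩ := exists_decomp hφ x
  have heq2 : xp φ L * (PushoutI.of j a₂ * PushoutI.of i a₁) * (xp φ L)⁻¹
      = PushoutI.base φ h₀⁻¹ * (PushoutI.of j g₂ * PushoutI.of i g₁) *
        (PushoutI.base φ h₀⁻¹)⁻¹ := by
    rw [← heq]; simp only [map_inv, mul_inv_rev, inv_inv]; group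
  rw [base_conj] at heq2
  obtain ⟨h, hcase | hcase⟩ := main hφ hij (nr_mul_left hg₂ h₀⁻¹)
    (nr_mul_right hg₁ h₀⁻¹⁻¹) L hOkL j i hij a₂ a₁ ha₂ ha₁ heq2
  · rw [base_conj] at hcase
    obtain ⟨k, hC, hD⟩ := unique_decomp hφ hij _ _ _ _ hcase
    refine ⟨h₀ * h⁻¹, k, ?_, ?_⟩
    · calc g₂ = φ j (h₀ * h⁻¹) * (φ j h * (φ j h₀⁻¹ * g₂)) := by
            simp only [map_mul, map_inv]; group
        _ = φ j (h₀ * h⁻¹) * (a₂ * φ j k) := by rw [hC]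
        _ = φ j (h₀ * h⁻¹) * a₂ * φ j k := by group
    · calc g₁ = (g₁ * φ i h₀⁻¹⁻¹ * φ i h⁻¹) * (φ i h * φ i h₀⁻¹) := by
            simp only [map_mul, map_inv, inv_inv]; group
        _ = (φ i k⁻¹ * a₁) * (φ i h * φ i h₀⁻¹) := by rw [hD]
        _ = φ i k⁻¹ * a₁ * φ i (h₀ * h⁻¹)⁻¹ := by
            simp only [map_mul, map_inv, mul_inv_rev, inv_inv]
  · rw [base_conj] at hcase
    have h6 := pair_cases hφ hij (Ne.symm hij) ha₂ ha₁
      (nr_mul_left (nr_mul_right hg₁ h₀⁻¹⁻¹) h) (nr_mul_right (nr_mul_left hg₂ h₀⁻¹) h⁻¹) hcase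
    exact absurd h6.1 hij

theorem conj_single_pushout {i j : ι} (hij : j ≠ i) {g₂ : G j} {g₁ : G i}
    (hg₂ : g₂ ∉ (φ j).range) (hg₁ : g₁ ∉ (φ i).range) (m : ι) (v : G m) (x : PushoutI φ) :
    x * PushoutI.of m v * x⁻¹ ≠ PushoutI.of j g₂ * PushoutI.of i g₁ := by
  intro heq
  obtain ⟨h₀, L, hOkL, rfl⟩ := exists_decomp hφ x
  have heq2 : xp φ L * PushoutI.of m v * (xp φ L)⁻¹
      = PushoutI.base φ h₀⁻¹ * (PushoutI.of j g₂ * PushoutI.of i g₁) *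
        (PushoutI.base φ h₀⁻¹)⁻¹ := by
    rw [← heq]; simp only [map_inv, mul_inv_rev, inv_inv]; group
  rw [base_conj] at heq2
  exact main0 hφ hij L hOkL m v (nr_mul_left hg₂ h₀⁻¹) (nr_mul_right hg₁ h₀⁻¹⁻¹) heq2

end PushoutTheory

/-! ### The integer Heisenberg group -/

def Heis : Type := ℤ × ℤ × ℤ

theorem ofFn_add_castAdd {α : Type*} {n m : ℕ} {f : Fin (n + m) → α} :
    List.ofFn f = (List.ofFn fun i => f (Fin.castAdd m i)) ++ List.ofFn fun i => f (Fin.natAdd n i) :=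
  List.ofFn_add

namespace Heis

instance : One Heis := ⟨((0 : ℤ), (0 : ℤ), (0 : ℤ))⟩
instance : Mul Heis := ⟨fun x y => (x.1 + y.1, x.2.1 + y.2.1, x.2.2 + y.2.2 + x.1 * y.2.1)⟩
instance : Inv Heis := ⟨fun x => (-x.1, -x.2.1, -x.2.2 + x.1 * x.2.1)⟩

theorem mul_def (x y : Heis) :
    x * y = (x.1 + y.1, x.2.1 + y.2.1, x.2.2 + y.2.2 + x.1 * y.2.1) := rfl
theorem one_def : (1 : Heis) = ((0 : ℤ), (0 : ℤ), (0 : ℤ)) := rfl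
theorem inv_def (x : Heis) : x⁻¹ = (-x.1, -x.2.1, -x.2.2 + x.1 * x.2.1) := rfl

protected theorem ext {x y : Heis} (h1 : x.1 = y.1) (h2 : x.2.1 = y.2.1)
    (h3 : x.2.2 = y.2.2) : x = y := Prod.ext h1 (Prod.ext h2 h3)

@[simp] theorem mul_fst (x y : Heis) : (x * y).1 = x.1 + y.1 := rfl
@[simp] theorem mul_snd_fst (x y : Heis) : (x * y).2.1 = x.2.1 + y.2.1 := rfl
@[simp] theorem mul_snd_snd (x y : Heis) : (x * y).2.2 = x.2.2 + y.2.2 + x.1 * y.2.1 := rfl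
@[simp] theorem one_fst : (1 : Heis).1 = 0 := rfl
@[simp] theorem one_snd_fst : (1 : Heis).2.1 = 0 := rfl
@[simp] theorem one_snd_snd : (1 : Heis).2.2 = 0 := rfl
@[simp] theorem inv_fst (x : Heis) : x⁻¹.1 = -x.1 := rfl
@[simp] theorem inv_snd_fst (x : Heis) : x⁻¹.2.1 = -x.2.1 := rfl
@[simp] theorem inv_snd_snd (x : Heis) : x⁻¹.2.2 = -x.2.2 + x.1 * x.2.1 := rfl

instance : Group Heis where
  mul_assoc a b c := by
    refine Heis.ext ?_ ?_ ?_ <;> simp <;> ring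
  one_mul a := by
    refine Heis.ext ?_ ?_ ?_ <;> simp
  mul_one a := by
    refine Heis.ext ?_ ?_ ?_ <;> simp
  inv_mul_cancel a := by
    refine Heis.ext ?_ ?_ ?_ <;> simp <;> ring

def A : Heis := ((1 : ℤ), (0 : ℤ), (0 : ℤ))
def B : Heis := ((0 : ℤ), (1 : ℤ), (0 : ℤ))
def C : Heis := ((0 : ℤ), (0 : ℤ), (1 : ℤ))

theorem comm_AB : ⁅A, B⁆ = C := by
  show A * B * A⁻¹ * B⁻¹ = C
  refine Heis.ext ?_ ?_ ?_ <;> rfl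

/-- the central embedding of `ℤ` -/
def zeta : Multiplicative ℤ →* Heis where
  toFun k := ((0 : ℤ), (0 : ℤ), k.toAdd)
  map_one' := rfl
  map_mul' x y := by
    refine Heis.ext ?_ ?_ ?_ <;> dsimp only [HMul.hMul, Mul.mul] <;> simp

theorem zeta_injective : Function.Injective zeta := by
  intro x y h
  have := congrArg (fun q : Heis => q.2.2) h
  exact this

theorem C_zpow (k : ℤ) : C ^ k = zeta (Multiplicative.ofAdd k) := by
  have h1 : C = zeta (Multiplicative.ofAdd 1) := rfl
  rw [h1, ← map_zpow]
  congr 1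
  apply Multiplicative.toAdd.injective
  rw [toAdd_zpow]
  simp

end Heis

/-! ### The two free factors -/

section Surface
variable (g₁ g₂ : ℕ)

def bside (i : Fin (g₁ + g₂)) : Bool := decide ((g₁ : ℕ) ≤ (i : ℕ))

abbrev Blk (b : Bool) : Type := {x : Fin (g₁ + g₂) × Bool // bside g₁ g₂ x.1 = b}

abbrev GB (b : Bool) : Type := FreeGroup (Blk g₁ g₂ b)

def comB (i : Fin (g₁ + g₂)) (b : Bool) (h : bside g₁ g₂ i = b) : GB g₁ g₂ b :=
  ⁅FreeGroup.of ((⟨(i, true), h⟩ : Blk g₁ g₂ b)), FreeGroup.of ((⟨(i, false), h⟩ : Blk g₁ g₂ b))⁆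

def cblk (b : Bool) : GB g₁ g₂ b :=
  (List.ofFn fun i : Fin (g₁ + g₂) =>
    if h : bside g₁ g₂ i = b then comB g₁ g₂ i b h else 1).prod

def eb : ∀ b : Bool, GB g₁ g₂ b
  | false => cblk g₁ g₂ false
  | true => (cblk g₁ g₂ true)⁻¹

def φS (b : Bool) : Multiplicative ℤ →* GB g₁ g₂ b := zpowersHom _ (eb g₁ g₂ b)

theorem bside_castAdd (k : Fin g₁) : bside g₁ g₂ (Fin.castAdd g₂ k) = false := by
  simp only [bside, Fin.coe_castAdd, decide_eq_false_iff_not, not_le]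
  exact k.is_lt

theorem bside_natAdd (k : Fin g₂) : bside g₁ g₂ (Fin.natAdd g₁ k) = true := by
  simp only [bside, Fin.coe_natAdd, decide_eq_true_eq]
  omega

theorem cblk_false : cblk g₁ g₂ false
    = (List.ofFn fun k : Fin g₁ =>
        comB g₁ g₂ (Fin.castAdd g₂ k) false (bside_castAdd g₁ g₂ k)).prod := by
  rw [cblk, ofFn_add_castAdd, List.prod_append]
  have h1 : (List.ofFn fun k : Fin g₁ =>
      if h : bside g₁ g₂ (Fin.castAdd g₂ k) = false then
        comB g₁ g₂ (Fin.castAdd g₂ k) false h else 1)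
      = (List.ofFn fun k : Fin g₁ =>
          comB g₁ g₂ (Fin.castAdd g₂ k) false (bside_castAdd g₁ g₂ k)) := by
    congr 1
    funext k
    rw [dif_pos (bside_castAdd g₁ g₂ k)]
  have h2 : (List.ofFn fun k : Fin g₂ =>
      if h : bside g₁ g₂ (Fin.natAdd g₁ k) = false then
        comB g₁ g₂ (Fin.natAdd g₁ k) false h else 1).prod = 1 := by
    apply List.prod_eq_one
    intro x hx
    obtain ⟨k, rfl⟩ := List.mem_ofFn.1 hx
    rw [dif_neg (by rw [bside_natAdd]; simp)]
  rw [h1, h2, mul_one]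

theorem cblk_true : cblk g₁ g₂ true
    = (List.ofFn fun k : Fin g₂ =>
        comB g₁ g₂ (Fin.natAdd g₁ k) true (bside_natAdd g₁ g₂ k)).prod := by
  rw [cblk, ofFn_add_castAdd, List.prod_append]
  have h1 : (List.ofFn fun k : Fin g₁ =>
      if h : bside g₁ g₂ (Fin.castAdd g₂ k) = true then
        comB g₁ g₂ (Fin.castAdd g₂ k) true h else 1).prod = 1 := by
    apply List.prod_eq_one
    intro x hx
    obtain ⟨k, rfl⟩ := List.mem_ofFn.1 hx
    rw [dif_neg (by rw [bside_castAdd]; simp)]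
  have h2 : (List.ofFn fun k : Fin g₂ =>
      if h : bside g₁ g₂ (Fin.natAdd g₁ k) = true then
        comB g₁ g₂ (Fin.natAdd g₁ k) true h else 1)
      = (List.ofFn fun k : Fin g₂ =>
          comB g₁ g₂ (Fin.natAdd g₁ k) true (bside_natAdd g₁ g₂ k)) := by
    congr 1
    funext k
    rw [dif_pos (bside_natAdd g₁ g₂ k)]
  rw [h1, h2, one_mul]

/-- homomorphism to the Heisenberg group detecting the `i₀`-th commutator -/
def ψmap (b : Bool) (i₀ : Fin (g₁ + g₂)) : GB g₁ g₂ b →* Heis :=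
  FreeGroup.lift fun x : Blk g₁ g₂ b =>
    if x.1.1 = i₀ then (if x.1.2 then Heis.A else Heis.B) else 1

theorem ψ_comB_eq (b : Bool) (i₀ : Fin (g₁ + g₂)) (h : bside g₁ g₂ i₀ = b) :
    ψmap g₁ g₂ b i₀ (comB g₁ g₂ i₀ b h) = Heis.C := by
  rw [comB, map_commutatorElement, ψmap, FreeGroup.lift_apply_of, FreeGroup.lift_apply_of]
  simp [Heis.comm_AB]

theorem ψ_comB_ne (b : Bool) (i₀ i : Fin (g₁ + g₂)) (h : bside g₁ g₂ i = b)
    (hne : i ≠ i₀) : ψmap g₁ g₂ b i₀ (comB g₁ g₂ i b h) = 1 := by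
  rw [comB, map_commutatorElement, ψmap, FreeGroup.lift_apply_of, FreeGroup.lift_apply_of]
  simp [hne, commutatorElement_def]

theorem ψ_cblk (b : Bool) (i₀ : Fin (g₁ + g₂)) (hb : bside g₁ g₂ i₀ = b) :
    ψmap g₁ g₂ b i₀ (cblk g₁ g₂ b) = Heis.C := by
  rw [cblk, map_list_prod, List.map_ofFn, List.ofFn_eq_map,
    List.prod_map_eq_pow_single i₀ _ ?_]
  · rw [List.count_eq_one_of_mem (List.nodup_finRange _) (List.mem_finRange _), pow_one]
    show ψmap g₁ g₂ b i₀ (if h : bside g₁ g₂ i₀ = b then comB g₁ g₂ i₀ b h else 1) = _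
    rw [dif_pos hb, ψ_comB_eq]
  · intro i hi _
    show ψmap g₁ g₂ b i₀ (if h : bside g₁ g₂ i = b then comB g₁ g₂ i b h else 1) = 1
    by_cases h : bside g₁ g₂ i = b
    · rw [dif_pos h, ψ_comB_ne g₁ g₂ b i₀ i h hi]
    · rw [dif_neg h, map_one]

theorem C_pow_inj {s t : ℤ} (h : Heis.C ^ s = Heis.C ^ t) : s = t := by
  have h2 : Heis.zeta (Multiplicative.ofAdd s) = Heis.zeta (Multiplicative.ofAdd t) := by
    rw [← Heis.C_zpow, ← Heis.C_zpow, h]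
  have := Heis.zeta_injective h2
  exact Multiplicative.ofAdd.injective this

theorem φS_injective (hg₁ : 1 ≤ g₁) (hg₂ : 1 ≤ g₂) (b : Bool) :
    Function.Injective (φS g₁ g₂ b) := by
  intro x y hxy
  apply Multiplicative.toAdd.injective
  cases b
  · have i₀ : Fin (g₁ + g₂) := ⟨0, by omega⟩
    have hb : bside g₁ g₂ (⟨0, by omega⟩ : Fin (g₁ + g₂)) = false := by
      simp only [bside, decide_eq_false_iff_not, not_le]
      omega
    have h2 := congrArg (ψmap g₁ g₂ false ⟨0, by omega⟩) hxy
    rw [φS, zpowersHom_apply, zpowersHom_apply, map_zpow, map_zpow] at h2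
    have he : ψmap g₁ g₂ false ⟨0, by omega⟩ (eb g₁ g₂ false) = Heis.C := by
      show ψmap g₁ g₂ false ⟨0, by omega⟩ (cblk g₁ g₂ false) = Heis.C
      exact ψ_cblk g₁ g₂ false _ hb
    rw [he] at h2
    exact C_pow_inj h2
  · have hb : bside g₁ g₂ (⟨g₁, by omega⟩ : Fin (g₁ + g₂)) = true := by
      simp only [bside, decide_eq_true_eq]
      omega
    have h2 := congrArg (ψmap g₁ g₂ true ⟨g₁, by omega⟩) hxy
    rw [φS, zpowersHom_apply, zpowersHom_apply, map_zpow, map_zpow] at h2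
    have he : ψmap g₁ g₂ true ⟨g₁, by omega⟩ (eb g₁ g₂ true) = Heis.C⁻¹ := by
      show ψmap g₁ g₂ true ⟨g₁, by omega⟩ (cblk g₁ g₂ true)⁻¹ = Heis.C⁻¹
      rw [map_inv, ψ_cblk g₁ g₂ true _ hb]
    rw [he] at h2
    simp only [inv_zpow] at h2
    exact neg_injective (C_pow_inj (by
      rw [← zpow_neg, ← zpow_neg] at h2
      exact h2))

end Surface

/-! ### The isomorphism with the pushout -/

section SurfaceHom
variable (g₁ g₂ : ℕ)

def tZ : Multiplicative ℤ := Multiplicative.ofAdd 1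

theorem base_pow (h : Multiplicative ℤ) :
    PushoutI.base (φS g₁ g₂) h = (PushoutI.base (φS g₁ g₂) (tZ)) ^ (Multiplicative.toAdd h) := by
  rw [← map_zpow]
  congr 1
  apply Multiplicative.toAdd.injective
  rw [toAdd_zpow]
  simp [tZ]

def fgen (x : Fin (g₁ + g₂) × Bool) : PushoutI (φS g₁ g₂) :=
  PushoutI.of (φ := φS g₁ g₂) (bside g₁ g₂ x.1) (FreeGroup.of ⟨x, rfl⟩)

theorem fgen_cast (x : Fin (g₁ + g₂) × Bool) (b : Bool) (h : bside g₁ g₂ x.1 = b) :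
    fgen g₁ g₂ x = PushoutI.of (φ := φS g₁ g₂) b (FreeGroup.of ⟨x, h⟩) := by
  subst h; rfl

def com (i : Fin (g₁ + g₂)) : GB g₁ g₂ (bside g₁ g₂ i) := comB g₁ g₂ i _ rfl

theorem of_com_cast (i : Fin (g₁ + g₂)) (b : Bool) (h : bside g₁ g₂ i = b) :
    PushoutI.of (φ := φS g₁ g₂) (bside g₁ g₂ i) (com g₁ g₂ i)
      = PushoutI.of (φ := φS g₁ g₂) b (comB g₁ g₂ i b h) := by
  subst h; rfl

theorem lift_fgen_com (i : Fin (g₁ + g₂)) :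
    FreeGroup.lift (fgen g₁ g₂) ⁅FreeGroup.of (i, true), FreeGroup.of (i, false)⁆
      = PushoutI.of (φ := φS g₁ g₂) (bside g₁ g₂ i) (com g₁ g₂ i) := by
  rw [map_commutatorElement, FreeGroup.lift_apply_of, FreeGroup.lift_apply_of, com, comB,
    map_commutatorElement]
  rfl

theorem of_eb_eq_base (b : Bool) :
    PushoutI.of (φ := φS g₁ g₂) b (eb g₁ g₂ b)
      = PushoutI.base (φS g₁ g₂) (tZ) := by
  have h : eb g₁ g₂ b = φS g₁ g₂ b (tZ) := by
    rw [φS, zpowersHom_apply]; simp [tZ]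
  rw [h, PushoutI.of_apply_eq_base]

theorem lift_fgen_rel :
    FreeGroup.lift (fgen g₁ g₂) (surfaceRel (g₁ + g₂)) = 1 := by
  rw [surfaceRel, map_list_prod, List.map_ofFn]
  have h1 : (⇑(FreeGroup.lift (fgen g₁ g₂)) ∘ fun i : Fin (g₁ + g₂) =>
      ⁅FreeGroup.of (i, true), FreeGroup.of (i, false)⁆)
      = fun i => PushoutI.of (φ := φS g₁ g₂) (bside g₁ g₂ i) (com g₁ g₂ i) := by
    funext i; exact lift_fgen_com g₁ g₂ i
  rw [h1, ofFn_add_castAdd, List.prod_append]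
  have h2 : (List.ofFn fun k : Fin g₁ => PushoutI.of (φ := φS g₁ g₂)
        (bside g₁ g₂ (Fin.castAdd g₂ k)) (com g₁ g₂ (Fin.castAdd g₂ k)))
      = List.ofFn fun k : Fin g₁ => PushoutI.of (φ := φS g₁ g₂) false
          (comB g₁ g₂ (Fin.castAdd g₂ k) false (bside_castAdd g₁ g₂ k)) := by
    congr 1; funext k; exact of_com_cast g₁ g₂ _ false (bside_castAdd g₁ g₂ k)
  have h3 : (List.ofFn fun k : Fin g₂ => PushoutI.of (φ := φS g₁ g₂)
        (bside g₁ g₂ (Fin.natAdd g₁ k)) (com g₁ g₂ (Fin.natAdd g₁ k)))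
      = List.ofFn fun k : Fin g₂ => PushoutI.of (φ := φS g₁ g₂) true
          (comB g₁ g₂ (Fin.natAdd g₁ k) true (bside_natAdd g₁ g₂ k)) := by
    congr 1; funext k; exact of_com_cast g₁ g₂ _ true (bside_natAdd g₁ g₂ k)
  have h4 : (List.ofFn fun k : Fin g₁ => PushoutI.of (φ := φS g₁ g₂) false
        (comB g₁ g₂ (Fin.castAdd g₂ k) false (bside_castAdd g₁ g₂ k))).prod
      = PushoutI.of (φ := φS g₁ g₂) false (cblk g₁ g₂ false) := by
    rw [cblk_false, map_list_prod, List.map_ofFn]; rfl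
  have h5 : (List.ofFn fun k : Fin g₂ => PushoutI.of (φ := φS g₁ g₂) true
        (comB g₁ g₂ (Fin.natAdd g₁ k) true (bside_natAdd g₁ g₂ k))).prod
      = PushoutI.of (φ := φS g₁ g₂) true (cblk g₁ g₂ true) := by
    rw [cblk_true, map_list_prod, List.map_ofFn]; rfl
  rw [h2, h3, h4, h5]
  have h6 : PushoutI.of (φ := φS g₁ g₂) false (cblk g₁ g₂ false)
      = PushoutI.base (φS g₁ g₂) (tZ) := of_eb_eq_base g₁ g₂ false
  have h7 : PushoutI.of (φ := φS g₁ g₂) true (cblk g₁ g₂ true)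
      = (PushoutI.base (φS g₁ g₂) (tZ))⁻¹ := by
    rw [← of_eb_eq_base g₁ g₂ true, ← map_inv]
    congr 1
    exact (inv_inv _).symm
  rw [h6, h7, mul_inv_cancel]

def FS : SurfaceGroup (g₁ + g₂) →* PushoutI (φS g₁ g₂) :=
  PresentedGroup.toGroup (f := fgen g₁ g₂) (by
    rintro r hr
    rw [Set.mem_singleton_iff] at hr
    subst hr
    exact lift_fgen_rel g₁ g₂)

theorem FS_of (x : Fin (g₁ + g₂) × Bool) :
    FS g₁ g₂ (PresentedGroup.of x) = fgen g₁ g₂ x :=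
  PresentedGroup.toGroup.of _

theorem FS_scom (i : Fin (g₁ + g₂)) :
    FS g₁ g₂ (scom i) = PushoutI.of (φ := φS g₁ g₂) (bside g₁ g₂ i) (com g₁ g₂ i) := by
  rw [scom, map_commutatorElement, sa, sb, FS_of, FS_of, com, comB, map_commutatorElement]
  rfl

def liftB (b : Bool) : GB g₁ g₂ b →* SurfaceGroup (g₁ + g₂) :=
  FreeGroup.lift fun x : Blk g₁ g₂ b => PresentedGroup.of x.1

def WA : SurfaceGroup (g₁ + g₂) := (List.ofFn fun k : Fin g₁ => scom (Fin.castAdd g₂ k)).prod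
def WB : SurfaceGroup (g₁ + g₂) := (List.ofFn fun k : Fin g₂ => scom (Fin.natAdd g₁ k)).prod

theorem mk_scom (i : Fin (g₁ + g₂)) :
    PresentedGroup.mk {surfaceRel (g₁ + g₂)} ⁅FreeGroup.of (i, true), FreeGroup.of (i, false)⁆
      = scom i := by
  rw [map_commutatorElement]; rfl

theorem WA_WB : WA g₁ g₂ * WB g₁ g₂ = 1 := by
  have h0 : PresentedGroup.mk {surfaceRel (g₁ + g₂)}
      ((List.ofFn fun i : Fin (g₁ + g₂) =>
        ⁅FreeGroup.of (i, true), FreeGroup.of (i, false)⁆).prod) = 1 := by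
    have := (QuotientGroup.eq_one_iff
      (N := Subgroup.normalClosure ({surfaceRel (g₁ + g₂)} : Set (FreeGroup (Fin (g₁+g₂) × Bool))))
      (surfaceRel (g₁ + g₂))).2
      (Subgroup.subset_normalClosure (Set.mem_singleton _))
    exact this
  rw [map_list_prod, List.map_ofFn] at h0
  have h1 : (⇑(PresentedGroup.mk {surfaceRel (g₁ + g₂)}) ∘ fun i : Fin (g₁ + g₂) =>
      ⁅FreeGroup.of (i, true), FreeGroup.of (i, false)⁆) = fun i => scom i := by
    funext i; exact mk_scom g₁ g₂ i
  rw [h1, ofFn_add_castAdd, List.prod_append] at h0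
  exact h0

theorem liftB_comB (b : Bool) (i : Fin (g₁ + g₂)) (h : bside g₁ g₂ i = b) :
    liftB g₁ g₂ b (comB g₁ g₂ i b h) = scom i := by
  rw [comB, map_commutatorElement, liftB, FreeGroup.lift_apply_of, FreeGroup.lift_apply_of]
  rfl

theorem liftB_comp (b : Bool) :
    (liftB g₁ g₂ b).comp (φS g₁ g₂ b) = zpowersHom _ (WA g₁ g₂) := by
  apply MonoidHom.ext_mint
  rw [MonoidHom.comp_apply, zpowersHom_apply]
  simp only [toAdd_ofAdd, zpow_one]
  have heb : φS g₁ g₂ b (Multiplicative.ofAdd 1) = eb g₁ g₂ b := by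
    rw [φS, zpowersHom_apply]; simp
  rw [heb]
  cases b
  · show liftB g₁ g₂ false (cblk g₁ g₂ false) = WA g₁ g₂
    rw [cblk_false, map_list_prod, List.map_ofFn, WA]
    refine congrArg List.prod (congrArg List.ofFn (funext fun k => ?_))
    exact liftB_comB g₁ g₂ false _ (bside_castAdd g₁ g₂ k)
  · show liftB g₁ g₂ true ((cblk g₁ g₂ true)⁻¹) = WA g₁ g₂
    rw [map_inv]
    have hB : liftB g₁ g₂ true (cblk g₁ g₂ true) = WB g₁ g₂ := by
      rw [cblk_true, map_list_prod, List.map_ofFn, WB]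
      refine congrArg List.prod (congrArg List.ofFn (funext fun k => ?_))
      exact liftB_comB g₁ g₂ true _ (bside_natAdd g₁ g₂ k)
    rw [hB]
    exact inv_eq_of_mul_eq_one_left (WA_WB g₁ g₂)

def GS : PushoutI (φS g₁ g₂) →* SurfaceGroup (g₁ + g₂) :=
  PushoutI.lift (liftB g₁ g₂) (zpowersHom _ (WA g₁ g₂)) (liftB_comp g₁ g₂)

theorem GS_FS (x : SurfaceGroup (g₁ + g₂)) : GS g₁ g₂ (FS g₁ g₂ x) = x := by
  have hcomp : (GS g₁ g₂).comp (FS g₁ g₂) = MonoidHom.id _ := by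
    apply PresentedGroup.ext
    intro x
    show GS g₁ g₂ (FS g₁ g₂ (PresentedGroup.of x)) = PresentedGroup.of x
    rw [FS_of, fgen]
    unfold GS
    rw [PushoutI.lift_of, liftB, FreeGroup.lift_apply_of]
  exact DFunLike.congr_fun hcomp x

theorem FS_inj : Function.Injective (FS g₁ g₂) := fun a b h => by
  have := congrArg (GS g₁ g₂) h
  rwa [GS_FS, GS_FS] at this

theorem FS_WA : FS g₁ g₂ (WA g₁ g₂)
    = PushoutI.of (φ := φS g₁ g₂) false (cblk g₁ g₂ false) := by
  rw [WA, map_list_prod, List.map_ofFn, cblk_false, map_list_prod, List.map_ofFn]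
  refine congrArg List.prod ?_
  refine congrArg List.ofFn ?_
  funext k
  show FS g₁ g₂ (scom _) = _
  rw [FS_scom, of_com_cast g₁ g₂ _ false (bside_castAdd g₁ g₂ k)]
  rfl

theorem FS_WB : FS g₁ g₂ (WB g₁ g₂)
    = PushoutI.of (φ := φS g₁ g₂) true (cblk g₁ g₂ true) := by
  rw [WB, map_list_prod, List.map_ofFn, cblk_true, map_list_prod, List.map_ofFn]
  refine congrArg List.prod ?_
  refine congrArg List.ofFn ?_
  funext k
  show FS g₁ g₂ (scom _) = _
  rw [FS_scom, of_com_cast g₁ g₂ _ true (bside_natAdd g₁ g₂ k)]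
  rfl

theorem filt1 : ((List.finRange (g₁ + g₂)).filter fun i : Fin (g₁ + g₂) => (i : ℕ) < g₁)
    = List.ofFn fun k : Fin g₁ => Fin.castAdd g₂ k := by
  rw [← List.ofFn_id, ofFn_add_castAdd, List.filter_append]
  have h1 : List.filter (fun i : Fin (g₁ + g₂) => decide ((i : ℕ) < g₁))
      (List.ofFn fun i : Fin g₁ => id (Fin.castAdd g₂ i))
      = List.ofFn fun i : Fin g₁ => id (Fin.castAdd g₂ i) := by
    rw [List.filter_eq_self]
    intro a ha
    obtain ⟨k, rfl⟩ := List.mem_ofFn.1 ha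
    simp
  have h2 : List.filter (fun i : Fin (g₁ + g₂) => decide ((i : ℕ) < g₁))
      (List.ofFn fun j : Fin g₂ => id (Fin.natAdd g₁ j)) = [] := by
    rw [List.filter_eq_nil_iff]
    intro a ha
    obtain ⟨k, rfl⟩ := List.mem_ofFn.1 ha
    simp
  rw [h1, h2, List.append_nil]
  rfl

theorem filt2 : ((List.finRange (g₁ + g₂)).filter fun i : Fin (g₁ + g₂) => g₁ ≤ (i : ℕ))
    = List.ofFn fun k : Fin g₂ => Fin.natAdd g₁ k := by
  rw [← List.ofFn_id, ofFn_add_castAdd, List.filter_append]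
  have h1 : List.filter (fun i : Fin (g₁ + g₂) => decide (g₁ ≤ (i : ℕ)))
      (List.ofFn fun i : Fin g₁ => id (Fin.castAdd g₂ i)) = [] := by
    rw [List.filter_eq_nil_iff]
    intro a ha
    obtain ⟨k, rfl⟩ := List.mem_ofFn.1 ha
    simp
  have h2 : List.filter (fun i : Fin (g₁ + g₂) => decide (g₁ ≤ (i : ℕ)))
      (List.ofFn fun j : Fin g₂ => id (Fin.natAdd g₁ j))
      = List.ofFn fun j : Fin g₂ => id (Fin.natAdd g₁ j) := by
    rw [List.filter_eq_self]
    intro a ha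
    obtain ⟨k, rfl⟩ := List.mem_ofFn.1 ha
    simp
  rw [h1, h2, List.nil_append]
  rfl

end SurfaceHom

end Stmt13Aux

open Stmt13Aux Monoid Monoid.PushoutI

theorem stmt13 (g g₁ g₂ : ℕ) (hg₁ : 1 ≤ g₁) (hg₂ : 1 ≤ g₂) (hg : g = g₁ + g₂)
    (wstar1 wstar2 : SurfaceGroup g)
    (hwstar1 : wstar1 = (((List.finRange g).filter fun i : Fin g => (i : ℕ) < g₁).map scom).prod)
    (hwstar2 : wstar2 = ((((List.finRange g).filter fun i : Fin g => g₁ ≤ (i : ℕ)).map scom).prod)⁻¹)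
    -- `π₁(Σ₁)` and `π₁(Σ₂)` as subgroups of `π₁(Σ)`
    (S₁ S₂ : Set (SurfaceGroup g))
    (hS₁ : S₁ = {x | ∃ i : Fin g, (i : ℕ) < g₁ ∧ (x = sa i ∨ x = sb i)})
    (hS₂ : S₂ = {x | ∃ i : Fin g, g₁ ≤ (i : ℕ) ∧ (x = sa i ∨ x = sb i)})
    (w₁ w₁' : SurfaceGroup g) (hw₁ : w₁ ∈ Subgroup.closure S₁)
    (hw₁' : w₁' ∈ Subgroup.closure S₁)
    (w₂ w₂' : SurfaceGroup g) (hw₂ : w₂ ∈ Subgroup.closure S₂)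
    (hw₂' : w₂' ∈ Subgroup.closure S₂)
    -- the geodesic in the class `[w₂ w₁]` intersects `γ_*` exactly twice:
    (htwice₁ : ∀ k : ℤ, w₁ ≠ wstar1 ^ k) (htwice₂ : ∀ k : ℤ, w₂ ≠ wstar2 ^ k) :
    IsConj (w₂ * w₁) (w₂' * w₁') ↔
      ∃ p q : ℤ, w₂ = wstar2 ^ p * w₂' * wstar2 ^ q ∧
        w₁ = wstar1 ^ (-q) * w₁' * wstar1 ^ (-p) := by
  subst hg
  have hφinj := φS_injective g₁ g₂ hg₁ hg₂
  have hFinj := FS_inj g₁ g₂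
  have hne : (true : Bool) ≠ false := by simp
  have hWA : wstar1 = WA g₁ g₂ := by
    rw [hwstar1, filt1, List.map_ofFn]; rfl
  have hWB : wstar2 = (WB g₁ g₂)⁻¹ := by
    rw [hwstar2, filt2, List.map_ofFn]; rfl
  have hw21 : wstar2 = wstar1 := by
    rw [hWA, hWB]
    exact inv_eq_of_mul_eq_one_left (WA_WB g₁ g₂)
  have hFW1 : FS g₁ g₂ wstar1 = PushoutI.base (φS g₁ g₂) (tZ) := by
    rw [hWA, FS_WA]
    exact of_eb_eq_base g₁ g₂ false
  have hFW2 : FS g₁ g₂ wstar2 = PushoutI.base (φS g₁ g₂) (tZ) := by rw [hw21]; exact hFW1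
  have hFW1p : ∀ p : ℤ, FS g₁ g₂ (wstar1 ^ p) = PushoutI.base (φS g₁ g₂) (tZ) ^ p :=
    fun p => by rw [map_zpow, hFW1]
  have hFW2p : ∀ p : ℤ, FS g₁ g₂ (wstar2 ^ p) = PushoutI.base (φS g₁ g₂) (tZ) ^ p :=
    fun p => by rw [map_zpow, hFW2]
  have hmem1 : ∀ w : SurfaceGroup (g₁ + g₂), w ∈ Subgroup.closure S₁ →
      ∃ u : GB g₁ g₂ false, PushoutI.of (φ := φS g₁ g₂) false u = FS g₁ g₂ w := by
    intro w hw
    have hsub : Subgroup.closure S₁ ≤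
        ((PushoutI.of (φ := φS g₁ g₂) false).range).comap (FS g₁ g₂) := by
      rw [Subgroup.closure_le]
      intro x hx
      rw [hS₁] at hx
      obtain ⟨i, hi, hx' | hx'⟩ := hx
      · subst hx'
        have hb : bside g₁ g₂ i = false := by
          simp only [bside, decide_eq_false_iff_not, not_le]; exact hi
        refine Subgroup.mem_comap.2 (MonoidHom.mem_range.2
          ⟨FreeGroup.of ⟨(i, true), hb⟩, ?_⟩)
        rw [sa, FS_of, fgen_cast g₁ g₂ (i, true) false hb]
      · subst hx'
        have hb : bside g₁ g₂ i = false := by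
          simp only [bside, decide_eq_false_iff_not, not_le]; exact hi
        refine Subgroup.mem_comap.2 (MonoidHom.mem_range.2
          ⟨FreeGroup.of ⟨(i, false), hb⟩, ?_⟩)
        rw [sb, FS_of, fgen_cast g₁ g₂ (i, false) false hb]
    exact MonoidHom.mem_range.1 (Subgroup.mem_comap.1 (hsub hw))
  have hmem2 : ∀ w : SurfaceGroup (g₁ + g₂), w ∈ Subgroup.closure S₂ →
      ∃ u : GB g₁ g₂ true, PushoutI.of (φ := φS g₁ g₂) true u = FS g₁ g₂ w := by
    intro w hw
    have hsub : Subgroup.closure S₂ ≤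
        ((PushoutI.of (φ := φS g₁ g₂) true).range).comap (FS g₁ g₂) := by
      rw [Subgroup.closure_le]
      intro x hx
      rw [hS₂] at hx
      obtain ⟨i, hi, hx' | hx'⟩ := hx
      · subst hx'
        have hb : bside g₁ g₂ i = true := by
          simp only [bside, decide_eq_true_eq]; exact hi
        refine Subgroup.mem_comap.2 (MonoidHom.mem_range.2
          ⟨FreeGroup.of ⟨(i, true), hb⟩, ?_⟩)
        rw [sa, FS_of, fgen_cast g₁ g₂ (i, true) true hb]
      · subst hx'
        have hb : bside g₁ g₂ i = true := by
          simp only [bside, decide_eq_true_eq]; exact hi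
        refine Subgroup.mem_comap.2 (MonoidHom.mem_range.2
          ⟨FreeGroup.of ⟨(i, false), hb⟩, ?_⟩)
        rw [sb, FS_of, fgen_cast g₁ g₂ (i, false) true hb]
    exact MonoidHom.mem_range.1 (Subgroup.mem_comap.1 (hsub hw))
  obtain ⟨u₂, hu₂⟩ := hmem2 w₂ hw₂
  obtain ⟨u₁, hu₁⟩ := hmem1 w₁ hw₁
  obtain ⟨u₂', hu₂'⟩ := hmem2 w₂' hw₂'
  obtain ⟨u₁', hu₁'⟩ := hmem1 w₁' hw₁'
  have hu₂n : u₂ ∉ (φS g₁ g₂ true).range := by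
    rintro ⟨k, rfl⟩
    refine htwice₂ (Multiplicative.toAdd k) ?_
    apply hFinj
    rw [hFW2p, ← hu₂, PushoutI.of_apply_eq_base, base_pow]
  have hu₁n : u₁ ∉ (φS g₁ g₂ false).range := by
    rintro ⟨k, rfl⟩
    refine htwice₁ (Multiplicative.toAdd k) ?_
    apply hFinj
    rw [hFW1p, ← hu₁, PushoutI.of_apply_eq_base, base_pow]
  constructor
  · intro hconj
    obtain ⟨cc, hcc⟩ := isConj_iff.1 hconj
    have hcc' : cc⁻¹ * (w₂' * w₁') * cc = w₂ * w₁ := by rw [← hcc]; group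
    have hF : (FS g₁ g₂ cc)⁻¹ * (FS g₁ g₂ w₂' * FS g₁ g₂ w₁') * ((FS g₁ g₂ cc)⁻¹)⁻¹
        = PushoutI.of (φ := φS g₁ g₂) true u₂ * PushoutI.of false u₁ := by
      calc (FS g₁ g₂ cc)⁻¹ * (FS g₁ g₂ w₂' * FS g₁ g₂ w₁') * ((FS g₁ g₂ cc)⁻¹)⁻¹
          = FS g₁ g₂ (cc⁻¹ * (w₂' * w₁') * cc) := by
            rw [map_mul, map_mul, map_mul, map_inv, inv_inv]
        _ = FS g₁ g₂ (w₂ * w₁) := by rw [hcc']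
        _ = PushoutI.of (φ := φS g₁ g₂) true u₂ * PushoutI.of false u₁ := by
            rw [map_mul, ← hu₂, ← hu₁]
    by_cases h2' : u₂' ∈ (φS g₁ g₂ true).range
    · exfalso
      obtain ⟨k', hk'⟩ := h2'
      have hz : FS g₁ g₂ w₂' * FS g₁ g₂ w₁'
          = PushoutI.of (φ := φS g₁ g₂) false (φS g₁ g₂ false k' * u₁') := by
        rw [← hu₂', ← hu₁', ← hk', map_mul, PushoutI.of_apply_eq_base,
          PushoutI.of_apply_eq_base]
      exact conj_single_pushout hφinj hne hu₂n hu₁n false _ ((FS g₁ g₂ cc)⁻¹)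
        (by rw [← hz]; exact hF)
    · by_cases h1' : u₁' ∈ (φS g₁ g₂ false).range
      · exfalso
        obtain ⟨k', hk'⟩ := h1'
        have hz : FS g₁ g₂ w₂' * FS g₁ g₂ w₁'
            = PushoutI.of (φ := φS g₁ g₂) true (u₂' * φS g₁ g₂ true k') := by
          rw [← hu₂', ← hu₁', ← hk', map_mul, PushoutI.of_apply_eq_base,
            PushoutI.of_apply_eq_base]
        exact conj_single_pushout hφinj hne hu₂n hu₁n true _ ((FS g₁ g₂ cc)⁻¹)
          (by rw [← hz]; exact hF)
      · have hzz : (FS g₁ g₂ cc)⁻¹ *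
            (PushoutI.of (φ := φS g₁ g₂) true u₂' * PushoutI.of false u₁') *
            ((FS g₁ g₂ cc)⁻¹)⁻¹
            = PushoutI.of (φ := φS g₁ g₂) true u₂ * PushoutI.of false u₁ := by
          rw [hu₂', hu₁']; exact hF
        obtain ⟨h, k, e₂, e₁⟩ := conj_two_pushout hφinj hne hu₂n hu₁n h2' h1'
          ((FS g₁ g₂ cc)⁻¹) hzz
        refine ⟨Multiplicative.toAdd h, Multiplicative.toAdd k, ?_, ?_⟩
        · apply hFinj
          rw [map_mul, map_mul, hFW2p, hFW2p, ← hu₂', ← hu₂, e₂, map_mul, map_mul,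
            PushoutI.of_apply_eq_base, PushoutI.of_apply_eq_base, ← base_pow, ← base_pow]
        · apply hFinj
          rw [map_mul, map_mul, hFW1p, hFW1p, ← hu₁', ← hu₁, e₁, map_mul, map_mul,
            PushoutI.of_apply_eq_base, PushoutI.of_apply_eq_base,
            base_pow g₁ g₂ k⁻¹, base_pow g₁ g₂ h⁻¹]
          simp only [toAdd_inv]
  · rintro ⟨p, q, hp, hq⟩
    rw [hp, hq, hw21]
    exact (isConj_iff.2 ⟨wstar1 ^ p, by group⟩).symm
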